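/- If s* < b = (1-τ)βy/x, the arbitrageur's profit -Δy - s*Δx with -Δy = f₊(x,y,Δx) is maximized over Δx > 0 at Δx* = (x/(1-τ))((b/s*)^{1-α} - 1), characterized by the first-order condition ∂f₊/∂z(x,y,Δx*) = s*. -/

import Mathlib

/-- Output of a sale of `z ≥ 0` units of X. -/
noncomputable def fplus (τ β x y z : ℝ) : ℝ := y * (1 - (x / (x + (1 - τ) * z)) ^ β)

lemma fplus_deriv (τ β x y : ℝ) (hx : 0 < x) {z : ℝ} (hz : 0 < x + (1 - τ) * z) :
    HasDerivAt (fun z => fplus τ β x y z)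
      (y * β * (1 - τ) * x ^ β / (x + (1 - τ) * z) ^ (β + 1)) z := by
  have h1 : HasDerivAt (fun z : ℝ => x + (1 - τ) * z) (1 - τ) z := by
    simpa using ((hasDerivAt_id z).const_mul (1 - τ)).const_add x
  have h2 : HasDerivAt (fun z : ℝ => x / (x + (1 - τ) * z))
      ((0 * (x + (1 - τ) * z) - x * (1 - τ)) / (x + (1 - τ) * z) ^ 2) z :=
    (hasDerivAt_const z x).div h1 hz.ne'
  have h3 := h2.rpow_const (p := β) (Or.inl (by positivity))
  have h4 := (h3.const_sub 1).const_mul y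
  refine h4.congr_deriv ?_
  symm
  set u := x + (1 - τ) * z with hu
  have hxu : (x / u) ^ (β - 1) = x ^ (β - 1) / u ^ (β - 1) :=
    Real.div_rpow hx.le hz.le _
  have hx1 : x ^ β = x ^ (β - 1) * x := by
    rw [← Real.rpow_add_one hx.ne' (β - 1)]; ring_nf
  have hu1 : u ^ (β + 1) = u ^ (β - 1) * u ^ 2 := by
    rw [← Real.rpow_natCast u 2, ← Real.rpow_add hz]; norm_num; ring_nf
  have hub : (0 : ℝ) < u ^ (β - 1) := Real.rpow_pos_of_pos hz _
  rw [hxu, hx1, hu1]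
  field_simp
  ring

/-- If `s* < b = (1-τ)βy/x`, the arbitrageur's profit `f₊(x,y,Δx) - s*·Δx` is maximized over
`Δx > 0` at `Δx* = (x/(1-τ))((b/s*)^(1-α) - 1)`, characterized by the first-order condition
`∂f₊/∂z(x,y,Δx*) = s*`. -/
theorem stmt_8 (α τ β x y sstar : ℝ)
    (hα : α ∈ Set.Ioo (0 : ℝ) 1) (hτ : τ ∈ Set.Ioo (0 : ℝ) 1)
    (hβ : β = α / (1 - α)) (hx : 0 < x) (hy : 0 < y)
    (hs : 0 < sstar) (hsb : sstar < (1 - τ) * β * y / x)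
    (Δxstar : ℝ)
    (hΔxstar : Δxstar = x / (1 - τ) * ((((1 - τ) * β * y / x) / sstar) ^ (1 - α) - 1)) :
    0 < Δxstar ∧
    HasDerivAt (fun z => fplus τ β x y z) sstar Δxstar ∧
    (∀ z, 0 < z → fplus τ β x y z - sstar * z ≤ fplus τ β x y Δxstar - sstar * Δxstar) := by
  obtain ⟨hα0, hα1⟩ := hα
  obtain ⟨hτ0, hτ1⟩ := hτ
  have hc : 0 < 1 - τ := by linarith
  have h1α : 0 < 1 - α := by linarith
  have hβpos : 0 < β := by rw [hβ]; positivity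
  have hβ1 : (1 - α) * (β + 1) = 1 := by rw [hβ]; field_simp; ring
  set b := (1 - τ) * β * y / x with hbdef
  have hb : 0 < b := by positivity
  have hr1 : 1 < b / sstar := (one_lt_div hs).mpr hsb
  have hrgt1 : 1 < (b / sstar) ^ (1 - α) :=
    (Real.one_lt_rpow_iff_of_pos (by positivity)).mpr (Or.inl ⟨hr1, h1α⟩)
  have hΔpos : 0 < Δxstar := by
    rw [hΔxstar]
    exact mul_pos (by positivity) (by linarith)
  have hA : x + (1 - τ) * Δxstar = x * ((b / sstar) ^ (1 - α)) := by
    rw [hΔxstar]; field_simp; ring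
  have hApos : 0 < x + (1 - τ) * Δxstar := by positivity
  have hApow : (x + (1 - τ) * Δxstar) ^ (β + 1) = x ^ (β + 1) * (b / sstar) := by
    rw [hA, Real.mul_rpow hx.le (by positivity), ← Real.rpow_mul (by positivity), hβ1,
      Real.rpow_one]
  have hxβ : (0 : ℝ) < x ^ β := Real.rpow_pos_of_pos hx _
  have hfoc : y * β * (1 - τ) * x ^ β / (x + (1 - τ) * Δxstar) ^ (β + 1) = sstar := by
    rw [hApow, Real.rpow_add_one hx.ne', hbdef]
    field_simp
  have hderiv : HasDerivAt (fun z => fplus τ β x y z) sstar Δxstar := by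
    have h := fplus_deriv τ β x y hx hApos
    rwa [hfoc] at h
  refine ⟨hΔpos, hderiv, ?_⟩
  set g : ℝ → ℝ := fun z => fplus τ β x y z - sstar * z with hg
  have hgderiv : ∀ w : ℝ, 0 < w →
      HasDerivAt g (y * β * (1 - τ) * x ^ β / (x + (1 - τ) * w) ^ (β + 1) - sstar) w := by
    intro w hw
    have hwz : 0 < x + (1 - τ) * w := by positivity
    have := (fplus_deriv τ β x y hx hwz).sub ((hasDerivAt_id w).const_mul sstar)
    simp only [mul_one] at this; exact this
  have key : ∀ w : ℝ, 0 < w → w ≠ Δxstar →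
      ((x + (1 - τ) * w) ^ (β + 1) < (x + (1 - τ) * Δxstar) ^ (β + 1) ↔ w < Δxstar) := by
    intro w hw _
    constructor
    · intro h
      by_contra hle
      push_neg at hle
      rcases eq_or_lt_of_le hle with rfl | hlt
      · exact lt_irrefl _ h
      · exact absurd h (not_lt.mpr (Real.rpow_le_rpow hApos.le (by nlinarith) (by linarith)))
    · intro h
      exact Real.rpow_lt_rpow (by positivity) (by nlinarith) (by linarith)
  intro z hz
  rcases lt_trichotomy z Δxstar with hlt | rfl | hgt
  · have hmono : StrictMonoOn g (Set.Icc z Δxstar) := by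
      apply strictMonoOn_of_deriv_pos (convex_Icc z Δxstar)
      · intro w hw
        exact (hgderiv w (lt_of_lt_of_le hz hw.1)).continuousAt.continuousWithinAt
      · intro w hw
        rw [interior_Icc] at hw
        have hw0 : 0 < w := lt_trans hz hw.1
        rw [(hgderiv w hw0).deriv]
        have hlt' : (x + (1 - τ) * w) ^ (β + 1) < (x + (1 - τ) * Δxstar) ^ (β + 1) :=
          Real.rpow_lt_rpow (by positivity) (by nlinarith [hw.2]) (by linarith)
        have := div_lt_div_of_pos_left (by positivity :
          (0:ℝ) < y * β * (1 - τ) * x ^ β) (by positivity) hlt'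
        linarith [hfoc]
    exact (hmono ⟨le_refl z, hlt.le⟩ ⟨hlt.le, le_refl Δxstar⟩ hlt).le
  · exact le_refl _
  · have hanti : StrictAntiOn g (Set.Icc Δxstar z) := by
      apply strictAntiOn_of_deriv_neg (convex_Icc Δxstar z)
      · intro w hw
        exact (hgderiv w (lt_of_lt_of_le hΔpos hw.1)).continuousAt.continuousWithinAt
      · intro w hw
        rw [interior_Icc] at hw
        have hw0 : 0 < w := lt_trans hΔpos hw.1
        rw [(hgderiv w hw0).deriv]
        have hlt' : (x + (1 - τ) * Δxstar) ^ (β + 1) < (x + (1 - τ) * w) ^ (β + 1) :=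
          Real.rpow_lt_rpow (by positivity) (by nlinarith [hw.1]) (by linarith)
        have := div_lt_div_of_pos_left (by positivity :
          (0:ℝ) < y * β * (1 - τ) * x ^ β) (by positivity) hlt'
        linarith [hfoc]
    exact (hanti ⟨le_refl Δxstar, hgt.le⟩ ⟨hgt.le, le_refl z⟩ hgt).le
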